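/- Let C be a symmetric positive-definite 2×2 real matrix with eigenvalues λ₁, λ₂ and unit eigenvector ξ₁ for λ₁ such that ξ₂ := Ωξ₁ is the eigenvector for λ₂. Let D := (1/2)(CΩ − ΩC) and, for v ≠ 0, let M(v) := [ 2⟨v,Cv⟩⟨v,v⟩ D − ⟨v,Dv⟩⟨v,v⟩ C − ⟨v,Dv⟩⟨v,Cv⟩ I ] / (⟨v,Cv⟩⟨v,v⟩)^{3/2}. Then for v = αξ₁ + βξ₂ with (α, β) ≠ (0,0): ⟨M(v) v, Ω v⟩ = [ (α²λ₁ + β²λ₂)(α² − β²)(λ₂ − λ₁) − α²β²(λ₂ − λ₁)² ] / [ (α² + β²)^{1/2} (α²λ₁ + β²λ₂)^{3/2} ]. -/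

import Mathlib

open Matrix

noncomputable def Omega : Matrix (Fin 2) (Fin 2) ℝ := !![0, -1; 1, 0]

noncomputable def shearD (C : Matrix (Fin 2) (Fin 2) ℝ) : Matrix (Fin 2) (Fin 2) ℝ :=
  (1 / 2 : ℝ) • (C * Omega - Omega * C)

/-- The matrix `M(v) = [2⟨v,Cv⟩⟨v,v⟩ D − ⟨v,Dv⟩⟨v,v⟩ C − ⟨v,Dv⟩⟨v,Cv⟩ I] / √(⟨v,Cv⟩⟨v,v⟩)³`. -/
noncomputable def Mmat (C : Matrix (Fin 2) (Fin 2) ℝ) (v : Fin 2 → ℝ) :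
    Matrix (Fin 2) (Fin 2) ℝ :=
  (Real.sqrt ((v ⬝ᵥ (C *ᵥ v)) * (v ⬝ᵥ v)) ^ 3)⁻¹ •
    ((2 * (v ⬝ᵥ (C *ᵥ v)) * (v ⬝ᵥ v)) • shearD C
      - ((v ⬝ᵥ ((shearD C) *ᵥ v)) * (v ⬝ᵥ v)) • C
      - ((v ⬝ᵥ ((shearD C) *ᵥ v)) * (v ⬝ᵥ (C *ᵥ v))) • (1 : Matrix (Fin 2) (Fin 2) ℝ))

/-- The boundary term `⟨M(v)v, Ωv⟩` of the first variation of the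
averaged Lagrangian shear, evaluated on `v = αξ₁ + βξ₂`, equals
`[(α²λ₁+β²λ₂)(α²−β²)(λ₂−λ₁) − α²β²(λ₂−λ₁)²] / [(α²+β²)^{1/2}(α²λ₁+β²λ₂)^{3/2}]`. -/
theorem boundary_term_eigenbasis (C : Matrix (Fin 2) (Fin 2) ℝ) (hC : C.PosDef)
    (lam₁ lam₂ : ℝ)
    (ξ₁ : Fin 2 → ℝ) (hξ₁unit : ξ₁ ⬝ᵥ ξ₁ = 1)
    (hξ₁ : C *ᵥ ξ₁ = lam₁ • ξ₁)
    (hξ₂ : C *ᵥ (Omega *ᵥ ξ₁) = lam₂ • (Omega *ᵥ ξ₁))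
    (α β : ℝ) (hαβ : (α, β) ≠ (0, 0)) :
    ((Mmat C (α • ξ₁ + β • (Omega *ᵥ ξ₁))) *ᵥ (α • ξ₁ + β • (Omega *ᵥ ξ₁)))
        ⬝ᵥ (Omega *ᵥ (α • ξ₁ + β • (Omega *ᵥ ξ₁)))
      = ((α ^ 2 * lam₁ + β ^ 2 * lam₂) * (α ^ 2 - β ^ 2) * (lam₂ - lam₁)
            - α ^ 2 * β ^ 2 * (lam₂ - lam₁) ^ 2)
        / (Real.sqrt (α ^ 2 + β ^ 2) * Real.sqrt (α ^ 2 * lam₁ + β ^ 2 * lam₂) ^ 3) := by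
  have hu : ξ₁ 0 * ξ₁ 0 + ξ₁ 1 * ξ₁ 1 = 1 := by
    simpa [dotProduct, Fin.sum_univ_two] using hξ₁unit
  set ξ₂ : Fin 2 → ℝ := Omega *ᵥ ξ₁ with hξ₂def
  have hΩΩ : Omega *ᵥ ξ₂ = -ξ₁ := by
    funext i
    fin_cases i <;>
      simp [hξ₂def, Omega, Matrix.mulVec, dotProduct, Fin.sum_univ_two]
  have h12 : ξ₁ ⬝ᵥ ξ₂ = 0 := by
    simp [hξ₂def, Omega, Matrix.mulVec, dotProduct, Fin.sum_univ_two]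
    ring
  have h21 : ξ₂ ⬝ᵥ ξ₁ = 0 := by
    simp [hξ₂def, Omega, Matrix.mulVec, dotProduct, Fin.sum_univ_two]
    ring
  have h22 : ξ₂ ⬝ᵥ ξ₂ = 1 := by
    simp [hξ₂def, Omega, Matrix.mulVec, dotProduct, Fin.sum_univ_two]
    linarith [hu]
  have hdot : ∀ p q r s : ℝ, (p • ξ₁ + q • ξ₂) ⬝ᵥ (r • ξ₁ + s • ξ₂) = p * r + q * s := by
    intro p q r s
    simp [dotProduct_add, add_dotProduct, smul_dotProduct, dotProduct_smul,
      hξ₁unit, h12, h21, h22, smul_eq_mul]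
    ring
  set v : Fin 2 → ℝ := α • ξ₁ + β • ξ₂ with hvdef
  have hCv : C *ᵥ v = (α * lam₁) • ξ₁ + (β * lam₂) • ξ₂ := by
    rw [hvdef, mulVec_add, mulVec_smul, mulVec_smul, hξ₁, hξ₂, smul_smul, smul_smul]
  have hΩv : Omega *ᵥ v = (-β) • ξ₁ + α • ξ₂ := by
    rw [hvdef, mulVec_add, mulVec_smul, mulVec_smul, hΩΩ, ← hξ₂def]
    module
  have hDv : shearD C *ᵥ v
      = (β * (lam₂ - lam₁) / 2) • ξ₁ + (α * (lam₂ - lam₁) / 2) • ξ₂ := by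
    show ((1 / 2 : ℝ) • (C * Omega - Omega * C)) *ᵥ v = _
    rw [smul_mulVec, sub_mulVec, ← mulVec_mulVec, ← mulVec_mulVec, hΩv, hCv,
      mulVec_add, mulVec_smul, mulVec_smul, hξ₁, hξ₂,
      mulVec_add, mulVec_smul, mulVec_smul, hΩΩ, ← hξ₂def]
    module
  have hN : v ⬝ᵥ v = α ^ 2 + β ^ 2 := by
    rw [hvdef, hdot]; ring
  have hA : v ⬝ᵥ (C *ᵥ v) = α ^ 2 * lam₁ + β ^ 2 * lam₂ := by
    rw [hCv, hvdef, hdot]; ring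
  have hq : v ⬝ᵥ (shearD C *ᵥ v) = α * β * (lam₂ - lam₁) := by
    rw [hDv, hvdef, hdot]; ring
  have hDΩ : (shearD C *ᵥ v) ⬝ᵥ (Omega *ᵥ v) = (α ^ 2 - β ^ 2) * (lam₂ - lam₁) / 2 := by
    rw [hDv, hΩv, hdot]; ring
  have hCΩ : (C *ᵥ v) ⬝ᵥ (Omega *ᵥ v) = α * β * (lam₂ - lam₁) := by
    rw [hCv, hΩv, hdot]; ring
  have hvΩ : v ⬝ᵥ (Omega *ᵥ v) = 0 := by
    rw [hΩv, hvdef, hdot]; ring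
  -- positivity of eigenvalues
  have hξ₁ne : ξ₁ ≠ 0 := by
    intro h; rw [h] at hξ₁unit; simp at hξ₁unit
  have hξ₂ne : ξ₂ ≠ 0 := by
    intro h; rw [h] at h22; simp at h22
  have hl₁ : 0 < lam₁ := by
    have := hC.dotProduct_mulVec_pos hξ₁ne
    simpa [hξ₁, dotProduct_smul, hξ₁unit, smul_eq_mul] using this
  have hl₂ : 0 < lam₂ := by
    have := hC.dotProduct_mulVec_pos hξ₂ne
    simpa [hξ₂, ← hξ₂def, dotProduct_smul, h22, smul_eq_mul] using this
  have hαβ' : α ≠ 0 ∨ β ≠ 0 := by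
    by_contra h
    push_neg at h
    exact hαβ (by simp [h.1, h.2])
  have hNpos : 0 < α ^ 2 + β ^ 2 := by
    rcases hαβ' with h | h <;> positivity
  have hApos : 0 < α ^ 2 * lam₁ + β ^ 2 * lam₂ := by
    rcases hαβ' with h | h
    · have : 0 < α ^ 2 * lam₁ := by positivity
      nlinarith [sq_nonneg β]
    · have : 0 < β ^ 2 * lam₂ := by positivity
      nlinarith [sq_nonneg α]
  -- expand Mmat
  rw [Mmat, smul_mulVec, smul_dotProduct, sub_mulVec, sub_mulVec,
    smul_mulVec, smul_mulVec, smul_mulVec, one_mulVec,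
    sub_dotProduct, sub_dotProduct, smul_dotProduct, smul_dotProduct, smul_dotProduct,
    hA, hN, hq, hDΩ, hCΩ, hvΩ, smul_eq_mul, smul_eq_mul, smul_eq_mul,
    Real.sqrt_mul hApos.le]
  set sA := Real.sqrt (α ^ 2 * lam₁ + β ^ 2 * lam₂) with hsAdef
  set sN := Real.sqrt (α ^ 2 + β ^ 2) with hsNdef
  have hsApos : 0 < sA := Real.sqrt_pos.mpr hApos
  have hsNpos : 0 < sN := Real.sqrt_pos.mpr hNpos
  have hsN2 : sN ^ 2 = α ^ 2 + β ^ 2 := Real.sq_sqrt hNpos.le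
  have hsN3 : sN ^ 3 = (α ^ 2 + β ^ 2) * sN := by rw [pow_succ, hsN2]
  rw [mul_pow, hsN3]
  have hsAne : sA ≠ 0 := ne_of_gt hsApos
  have hsNne : sN ≠ 0 := ne_of_gt hsNpos
  have hNne : (α ^ 2 + β ^ 2) ≠ 0 := ne_of_gt hNpos
  field_simp
  ring
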